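/- Let Ĥ₁ be the multigraph with vertices a₁,b₁,v₁,v₂,a₂,b₂, a double edge between a₁ and b₁, a double edge between a₂ and b₂, and single edges a₁v₁, b₁v₁, v₁v₂, a₂v₂, b₂v₂; and let Ĥ₂ be the multigraph obtained from Ĥ₁ by identifying v₁ and v₂ into a single vertex v (so Ĥ₂ has vertices a₁,b₁,v,a₂,b₂, double edges a₁b₁ and a₂b₂, and single edges a₁v, b₁v, a₂v, b₂v). Then no ≥2-subdivision of Ĥ₁ and no ≥2-subdivision of Ĥ₂ is a restricted frame graph. -/

import Mathlib

/-! ## Frames and restricted frame graphs -/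

/-- An axis-parallel box in `ℝ²`, i.e. a product `[x1,x2] × [y1,y2]` of two closed
nondegenerate intervals. -/
structure Box : Type where
  x1 : ℝ
  x2 : ℝ
  y1 : ℝ
  y2 : ℝ
  hx : x1 < x2
  hy : y1 < y2

namespace Box

/-- The region bounded by the frame of a box: the closed box itself. -/
def region (B : Box) : Set (ℝ × ℝ) :=
  {p : ℝ × ℝ | B.x1 ≤ p.1 ∧ p.1 ≤ B.x2 ∧ B.y1 ≤ p.2 ∧ p.2 ≤ B.y2}

/-- The frame of a box: the topological boundary of the closed box. -/
def frame (B : Box) : Set (ℝ × ℝ) :=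
  {p : ℝ × ℝ | p ∈ B.region ∧ (p.1 = B.x1 ∨ p.1 = B.x2 ∨ p.2 = B.y1 ∨ p.2 = B.y2)}

/-- The left side `{x1} × [y1,y2]` of a frame. -/
def leftSide (B : Box) : Set (ℝ × ℝ) :=
  {p : ℝ × ℝ | p.1 = B.x1 ∧ B.y1 ≤ p.2 ∧ p.2 ≤ B.y2}

/-- The right side `{x2} × [y1,y2]` of a frame. -/
def rightSide (B : Box) : Set (ℝ × ℝ) :=
  {p : ℝ × ℝ | p.1 = B.x2 ∧ B.y1 ≤ p.2 ∧ p.2 ≤ B.y2}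

/-- The top side `[x1,x2] × {y2}` of a frame. -/
def topSide (B : Box) : Set (ℝ × ℝ) :=
  {p : ℝ × ℝ | p.2 = B.y2 ∧ B.x1 ≤ p.1 ∧ p.1 ≤ B.x2}

/-- The bottom side `[x1,x2] × {y1}` of a frame. -/
def bottomSide (B : Box) : Set (ℝ × ℝ) :=
  {p : ℝ × ℝ | p.2 = B.y1 ∧ B.x1 ≤ p.1 ∧ p.1 ≤ B.x2}

/-- The four corners of a frame. -/
def corners (B : Box) : Set (ℝ × ℝ) :=
  {(B.x1, B.y1), (B.x1, B.y2), (B.x2, B.y1), (B.x2, B.y2)}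

/-- `Box.Inside inner outer` : the frame of `outer` contains the frame of `inner`,
i.e. the two frames are disjoint and the frame of `inner` is contained in the region
bounded by the frame of `outer`. -/
def Inside (inner outer : Box) : Prop :=
  inner.frame ∩ outer.frame = ∅ ∧ inner.frame ⊆ outer.region

/-- `Box.Outside B outer` : the frames are disjoint and `B` is not inside `outer`. -/
def Outside (B outer : Box) : Prop :=
  B.frame ∩ outer.frame = ∅ ∧ ¬ Inside B outer

end Box

/-- A family of frames `(F v)` is a representation of the graph `G` as a restricted
frame graph: distinct vertices are adjacent iff their frames intersect, and the four
restrictions on the representation hold. -/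
structure IsFrameRepresentation {V : Type} (G : SimpleGraph V) (F : V → Box) : Prop where
  /-- Distinct vertices are adjacent iff their frames intersect. -/
  adj_iff : ∀ u v : V, u ≠ v → (G.Adj u v ↔ ((F u).frame ∩ (F v).frame).Nonempty)
  /-- (1) Corners of a frame do not coincide with any point of another frame. -/
  corner_free : ∀ u v : V, u ≠ v → (F u).corners ∩ (F v).frame = ∅
  /-- (2) The left side of a frame does not intersect any other frame. -/
  left_free : ∀ u v : V, u ≠ v → (F u).leftSide ∩ (F v).frame = ∅
  /-- (3) If the right side of a frame intersects a second frame, this right side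
  intersects both the top and the bottom side of that second frame. -/
  right_cross : ∀ u v : V, u ≠ v →
    ((F u).rightSide ∩ (F v).frame).Nonempty →
    ((F u).rightSide ∩ (F v).topSide).Nonempty ∧
      ((F u).rightSide ∩ (F v).bottomSide).Nonempty
  /-- (4) If two frames intersect, no third frame is entirely contained in the
  intersection of the regions bounded by the two frames. -/
  not_nested : ∀ u v w : V, u ≠ v → w ≠ u → w ≠ v →
    ((F u).frame ∩ (F v).frame).Nonempty →
    ¬ ((F w).frame ⊆ (F u).region ∩ (F v).region)

/-- A graph is a restricted frame graph if it admits a frame representation. -/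
def IsRestrictedFrameGraph {V : Type} (G : SimpleGraph V) : Prop :=
  ∃ F : V → Box, IsFrameRepresentation G F

/-! ## Basic graph notions -/

/-- The closed neighborhood `N[u] = {u} ∪ N(u)`. -/
def closedNbhd {V : Type} (G : SimpleGraph V) (u : V) : Set V :=
  insert u (G.neighborSet u)

/-- `G` has a full star-cutset: for some vertex `u` the removal of `N[u]`
disconnects `G`. -/
def HasFullStarCutset {V : Type} (G : SimpleGraph V) : Prop :=
  ∃ u : V, ¬ (G.induce ((closedNbhd G u)ᶜ)).Preconnected

/-- `v` is a cut-vertex of `G`: its removal disconnects `G`. -/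
def IsCutVertex {V : Type} (G : SimpleGraph V) (v : V) : Prop :=
  ¬ (G.induce {u : V | u ≠ v}).Preconnected

/-- `G` is a path graph: its vertices can be enumerated `0, …, n-1` so that two
vertices are adjacent iff they are consecutive. -/
def IsPathGraph {V : Type} (G : SimpleGraph V) : Prop :=
  ∃ (n : ℕ) (e : V ≃ Fin n), ∀ u v : V,
    G.Adj u v ↔ ((e u : ℕ) + 1 = (e v : ℕ) ∨ (e v : ℕ) + 1 = (e u : ℕ))

/-- `G` is a cycle graph (on at least 3 vertices). -/
def IsCycleGraphOn {V : Type} (G : SimpleGraph V) : Prop :=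
  ∃ n : ℕ, 3 ≤ n ∧ ∃ e : V ≃ Fin n, ∀ u v : V,
    G.Adj u v ↔ (((e u : ℕ) + 1) % n = (e v : ℕ) ∨ ((e v : ℕ) + 1) % n = (e u : ℕ))

/-- `x` is a leaf of `T`: it has exactly one neighbor. -/
def IsLeaf {V : Type} (T : SimpleGraph V) (x : V) : Prop :=
  (T.neighborSet x).ncard = 1

/-- `G` is a chandelier with pivot `v`: `G - v` is a tree `T` and `v` is adjacent to
exactly the leaves of `T`. -/
def IsChandelierWithPivot {V : Type} (G : SimpleGraph V) (v : V) : Prop :=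
  (G.induce {u : V | u ≠ v}).IsTree ∧
    ∀ u : ↥{u : V | u ≠ v}, (G.Adj v u.val ↔ IsLeaf (G.induce {u : V | u ≠ v}) u)

/-- `G` is a chandelier. -/
def IsChandelier {V : Type} (G : SimpleGraph V) : Prop :=
  ∃ v : V, IsChandelierWithPivot G v

/-- `G` is a luxury chandelier: a chandelier (with pivot `v` and tree `T = G - v`)
such that the neighbor in `T` of each leaf of `T` has degree 2 in `T`. -/
def IsLuxuryChandelier {V : Type} (G : SimpleGraph V) : Prop :=
  ∃ v : V, IsChandelierWithPivot G v ∧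
    ∀ x y : ↥{u : V | u ≠ v}, (G.induce {u : V | u ≠ v}).Adj x y →
      IsLeaf (G.induce {u : V | u ≠ v}) x →
      ((G.induce {u : V | u ≠ v}).neighborSet y).ncard = 2

/-! ## Multigraphs and subdivisions -/

/-- A loopless multigraph on vertex set `V`: a symmetric multiplicity function. -/
structure Multigraph (V : Type) where
  m : V → V → ℕ
  symm : ∀ u v : V, m u v = m v u
  loopless : ∀ v : V, m v v = 0

/-- The multigraph associated with a simple graph (each edge has multiplicity 1). -/
noncomputable def SimpleGraph.toMultigraph {V : Type} (G : SimpleGraph V) : Multigraph V where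
  m u v := @ite ℕ (G.Adj u v) (Classical.dec _) 1 0
  symm u v := by
    beta_reduce
    by_cases h : G.Adj u v
    · rw [if_pos h, if_pos (G.adj_symm h)]
    · rw [if_neg h, if_neg (fun h' => h (G.adj_symm h'))]
  loopless v := by
    beta_reduce
    rw [if_neg G.irrefl]

/-- The interior (set of internal vertices) of a walk. -/
def walkInterior {V : Type} {G : SimpleGraph V} {a b : V} (p : G.Walk a b) : Set V :=
  {w : V | w ∈ p.support ∧ w ≠ a ∧ w ≠ b}

/-- A witness that the simple graph `H` is a `≥k`-subdivision of the multigraph `G`: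
each edge of `G` (counted with multiplicity) is replaced by a path with at least
`k+1` edges between (the images of) its endpoints, these paths being internally
disjoint from each other and from the branch vertices, and covering all of `H`. -/
structure MultiSubdivision {V W : Type} (G : Multigraph V) (H : SimpleGraph W) (k : ℕ) where
  /-- the embedding of branch vertices -/
  f : V ↪ W
  /-- the path replacing the `i`-th parallel edge between `u` and `v` -/
  path : ∀ u v : V, Fin (G.m u v) → H.Walk (f u) (f v)
  path_symm : ∀ (u v : V) (i : Fin (G.m u v)),
    path v u (Fin.cast (G.symm u v) i) = (path u v i).reverse
  path_ne : ∀ (u v : V) (i i' : Fin (G.m u v)), (i : ℕ) ≠ (i' : ℕ) →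
    path u v i ≠ path u v i'
  isPath : ∀ (u v : V) (i : Fin (G.m u v)), (path u v i).IsPath
  length_le : ∀ (u v : V) (i : Fin (G.m u v)), k + 1 ≤ (path u v i).length
  /-- the paths are internally disjoint from the branch vertices -/
  interior_avoid : ∀ (u v : V) (i : Fin (G.m u v)) (x : V),
    f x ∉ walkInterior (path u v i)
  /-- distinct paths are pairwise internally disjoint -/
  interior_disjoint : ∀ (u v : V) (i : Fin (G.m u v)) (u' v' : V) (i' : Fin (G.m u' v')),
    (walkInterior (path u v i) ∩ walkInterior (path u' v' i')).Nonempty →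
    (u = u' ∧ v = v' ∧ (i : ℕ) = (i' : ℕ)) ∨ (u = v' ∧ v = u' ∧ (i : ℕ) = (i' : ℕ))
  /-- every vertex of `H` is a branch vertex or an internal vertex of a path -/
  vertex_cover : ∀ w : W, (∃ x : V, f x = w) ∨
    ∃ (u v : V) (i : Fin (G.m u v)), w ∈ walkInterior (path u v i)
  /-- every edge of `H` lies on one of the paths -/
  edge_cover : ∀ e ∈ H.edgeSet, ∃ (u v : V) (i : Fin (G.m u v)), e ∈ (path u v i).edges

/-- `H` is a `≥k`-subdivision of the multigraph `G`. -/
def IsSubdivisionGE {V W : Type} (G : Multigraph V) (k : ℕ) (H : SimpleGraph W) : Prop :=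
  Nonempty (MultiSubdivision G H k)

/-- `H` is a subdivision of the simple graph `G` (every edge is replaced by a path
with at least one edge). -/
def IsSubdivision {V W : Type} (G : SimpleGraph V) (H : SimpleGraph W) : Prop :=
  IsSubdivisionGE G.toMultigraph 0 H

namespace Multigraph

/-- The underlying simple graph of a multigraph. -/
def support {V : Type} (G : Multigraph V) : SimpleGraph V where
  Adj u v := 0 < G.m u v
  symm := by
    constructor
    intro u v h
    beta_reduce at h ⊢
    rw [G.symm v u]
    exact h
  loopless := by
    constructor
    intro v h
    beta_reduce at h
    rw [G.loopless v] at h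
    exact Nat.lt_irrefl 0 h

/-- A multigraph is connected if its underlying simple graph is. -/
def Connected {V : Type} (G : Multigraph V) : Prop :=
  G.support.Connected

/-- A multigraph is 2-connected if it is connected, has at least two vertices, and
deleting any single vertex leaves it connected. -/
def TwoConnected {V : Type} (G : Multigraph V) : Prop :=
  G.support.Connected ∧ (∃ u v : V, u ≠ v) ∧
    ∀ v : V, (G.support.induce {u : V | u ≠ v}).Connected

/-- `v` is a feedback vertex of the multigraph `G`: `G - v` contains no cycle
(where a pair of parallel edges forms a cycle of length 2). -/
def IsFeedbackVertex {V : Type} (G : Multigraph V) (v : V) : Prop :=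
  (G.support.induce {u : V | u ≠ v}).IsAcyclic ∧
    ∀ u w : V, u ≠ v → w ≠ v → G.m u w ≤ 1

end Multigraph

/-! ## Induced cycles and big vertices -/

/-- `C` induces a cycle in `G`. -/
def IsInducedCycle {V : Type} (G : SimpleGraph V) (C : Set V) : Prop :=
  IsCycleGraphOn (G.induce C)

/-- `v` is a big vertex of the (induced cycle on) `C` with respect to the frame
representation `F`: `v ∈ C` and `F v` contains the frame of every vertex of `C`
outside `N[v]`. -/
def IsBigVertexOf {V : Type} (G : SimpleGraph V) (F : V → Box) (C : Set V) (v : V) : Prop :=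
  v ∈ C ∧ ∀ u ∈ C, u ≠ v → ¬ G.Adj v u → Box.Inside (F u) (F v)

/-- `v` is a big vertex of the representation `F`: it is a big vertex of some
induced cycle of `G`. -/
def IsBigVertex {V : Type} (G : SimpleGraph V) (F : V → Box) (v : V) : Prop :=
  ∃ C : Set V, IsInducedCycle G C ∧ IsBigVertexOf G F C v

/-! ## Gluing a chandelier onto a vertex -/

/-- The graph obtained from the disjoint union of `G₁` and `G₂` by identifying the
vertex `v` of `G₁` with the vertex `p` of `G₂`. -/
def glueAt {V₁ V₂ : Type} (G₁ : SimpleGraph V₁) (G₂ : SimpleGraph V₂) (v : V₁) (p : V₂) :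
    SimpleGraph (V₁ ⊕ {x : V₂ // x ≠ p}) :=
  SimpleGraph.fromRel (fun a b =>
    match a, b with
    | Sum.inl u, Sum.inl w => G₁.Adj u w
    | Sum.inr u, Sum.inr w => G₂.Adj u.val w.val
    | Sum.inl u, Sum.inr w => u = v ∧ G₂.Adj p w.val
    | Sum.inr _, Sum.inl _ => False)

/-! ## The multigraphs `Ĥ₁` and `Ĥ₂` -/

/-- The multiplicity matrix of `Ĥ₁` (vertices `a₁ = 0`, `b₁ = 1`, `v₁ = 2`, `v₂ = 3`,
`a₂ = 4`, `b₂ = 5`). -/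
def H1hatMatrix : Matrix (Fin 6) (Fin 6) ℕ :=
  !![0, 2, 1, 0, 0, 0;
     2, 0, 1, 0, 0, 0;
     1, 1, 0, 1, 0, 0;
     0, 0, 1, 0, 1, 1;
     0, 0, 0, 1, 0, 2;
     0, 0, 0, 1, 2, 0]

/-- The multigraph `Ĥ₁`: two disjoint digons `a₁b₁`, `a₂b₂`, and single edges
`a₁v₁`, `b₁v₁`, `v₁v₂`, `a₂v₂`, `b₂v₂`. -/
def H1hat : Multigraph (Fin 6) where
  m u v := H1hatMatrix u v
  symm := by intro u v; fin_cases u <;> fin_cases v <;> rfl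
  loopless := by decide

/-- The multiplicity matrix of `Ĥ₂` (vertices `a₁ = 0`, `b₁ = 1`, `v = 2`,
`a₂ = 3`, `b₂ = 4`). -/
def H2hatMatrix : Matrix (Fin 5) (Fin 5) ℕ :=
  !![0, 2, 1, 0, 0;
     2, 0, 1, 0, 0;
     1, 1, 0, 1, 1;
     0, 0, 1, 0, 2;
     0, 0, 1, 2, 0]

/-- The multigraph `Ĥ₂`: two digons `a₁b₁`, `a₂b₂`, and single edges
`a₁v`, `b₁v`, `a₂v`, `b₂v`. -/
def H2hat : Multigraph (Fin 5) where
  m u v := H2hatMatrix u v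
  symm := by intro u v; fin_cases u <;> fin_cases v <;> rfl
  loopless := by decide

/-! ## Subdivisions of `K₄` and their type -/

/-- The complete graph on four vertices. -/
def K4 : SimpleGraph (Fin 4) := ⊤

/-- The set of edges of `K₄` that are subdivided at least once in the subdivision
witnessed by `S` (i.e. replaced by a path with at least two edges). -/
def subdividedEdges {W : Type} {H : SimpleGraph W}
    (S : MultiSubdivision K4.toMultigraph H 0) : Set (Sym2 (Fin 4)) :=
  {e : Sym2 (Fin 4) | ∃ (u v : Fin 4) (i : Fin (K4.toMultigraph.m u v)),
    e = s(u, v) ∧ 2 ≤ (S.path u v i).length}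

/-! ## Adding a twin -/

/-- The graph obtained from `G` by adding a twin of `v`: a new vertex, non-adjacent
to `v`, whose neighborhood is exactly `N(v)`. -/
def addTwin {V : Type} (G : SimpleGraph V) (v : V) : SimpleGraph (V ⊕ Unit) :=
  SimpleGraph.fromRel (fun a b =>
    match a, b with
    | Sum.inl u, Sum.inl w => G.Adj u w
    | Sum.inr _, Sum.inl u => G.Adj v u
    | _, _ => False)

/-! ## The construction of Burling and Pawlik et al. -/

/-- A graph-stable set pair: a graph together with a collection of sets of vertices
(intended: stable sets). -/
structure GSPair : Type 1 where
  V : Type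
  G : SimpleGraph V
  S : Set (Set V)

namespace GSPair

/-- The vertex type of `next P`: the original vertices, the vertices `(s, u)` of the
copy `H_s` of the graph for each `s ∈ 𝒮`, and the new vertices `v_{s,t}`. -/
abbrev nextVertex (P : GSPair) : Type :=
  P.V ⊕ ((↥P.S × P.V) ⊕ (↥P.S × ↥P.S))

/-- The adjacency generator for the graph of `next P`. -/
def nextRel (P : GSPair) : P.nextVertex → P.nextVertex → Prop
  | Sum.inl u, Sum.inl v => P.G.Adj u v
  | Sum.inr (Sum.inl (s, u)), Sum.inr (Sum.inl (t, v)) => s = t ∧ P.G.Adj u v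
  | Sum.inr (Sum.inr (s, t)), Sum.inr (Sum.inl (s', v)) => s = s' ∧ v ∈ (t : Set P.V)
  | _, _ => False

/-- The procedure `next`: add a disjoint copy `H_s` of the graph for each `s ∈ 𝒮`, a
vertex `v_{s,t}` whose neighborhood is exactly the copy of `t` inside `H_s` for all
`s, t ∈ 𝒮`, and take as new collection of stable sets all `s ∪ t_s` and
`s ∪ {v_{s,t}}`. -/
def next (P : GSPair) : GSPair where
  V := P.nextVertex
  G := SimpleGraph.fromRel P.nextRel
  S := {A : Set P.nextVertex | ∃ s t : ↥P.S,
    A = (Sum.inl '' (s : Set P.V) : Set P.nextVertex) ∪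
        ((fun u : P.V => (Sum.inr (Sum.inl (s, u)) : P.nextVertex)) '' (t : Set P.V)) ∨
    A = (Sum.inl '' (s : Set P.V) : Set P.nextVertex) ∪ {Sum.inr (Sum.inr (s, t))}}

/-- The starting pair: a single vertex, with the single stable set consisting of
that vertex. -/
def base : GSPair := ⟨PUnit, ⊥, {Set.univ}⟩

/-- `P` is an induced subgraph-stable set pair of `Q`. -/
def IsInducedSubpair (P Q : GSPair) : Prop :=
  ∃ f : P.V ↪ Q.V, (∀ u v : P.V, P.G.Adj u v ↔ Q.G.Adj (f u) (f v)) ∧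
    ∀ A ∈ P.S, ∃ B ∈ Q.S, A = f ⁻¹' B

/-- A graph-stable set pair is constructible if it is an induced subgraph-stable set
pair of some iterate of `next` on the starting pair. -/
def Constructible (P : GSPair) : Prop :=
  ∃ i : ℕ, IsInducedSubpair P (next^[i] base)

end GSPair


namespace S15

/-- `A` crosses `B` : the right side of `A` crosses through `B`. -/
def Cross (A B : Box) : Prop :=
  A.x1 < B.x1 ∧ B.x1 < A.x2 ∧ A.x2 < B.x2 ∧ A.y1 < B.y1 ∧ B.y2 < A.y2

/-- `A` is strictly nested inside `B`. -/
def BIn (A B : Box) : Prop :=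
  B.x1 < A.x1 ∧ A.x2 < B.x2 ∧ B.y1 < A.y1 ∧ A.y2 < B.y2

lemma bin_asymm {A B : Box} (h1 : BIn A B) (h2 : BIn B A) : False := by
  obtain ⟨a, -, -, -⟩ := h1; obtain ⟨b, -, -, -⟩ := h2; linarith

lemma mem_frame {B : Box} {p : ℝ × ℝ} (hx1 : B.x1 ≤ p.1) (hx2 : p.1 ≤ B.x2)
    (hy1 : B.y1 ≤ p.2) (hy2 : p.2 ≤ B.y2)
    (hb : p.1 = B.x1 ∨ p.1 = B.x2 ∨ p.2 = B.y1 ∨ p.2 = B.y2) : p ∈ B.frame :=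
  ⟨⟨hx1, hx2, hy1, hy2⟩, hb⟩

lemma frame_region {B : Box} {p : ℝ × ℝ} (hp : p ∈ B.frame) :
    B.x1 ≤ p.1 ∧ p.1 ≤ B.x2 ∧ B.y1 ≤ p.2 ∧ p.2 ≤ B.y2 := hp.1

lemma frame_cases {B : Box} {p : ℝ × ℝ} (hp : p ∈ B.frame) :
    p ∈ B.leftSide ∨ p ∈ B.rightSide ∨ p ∈ B.topSide ∨ p ∈ B.bottomSide := by
  obtain ⟨⟨h1, h2, h3, h4⟩, hb⟩ := hp
  rcases hb with h | h | h | h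
  · exact Or.inl ⟨h, h3, h4⟩
  · exact Or.inr (Or.inl ⟨h, h3, h4⟩)
  · exact Or.inr (Or.inr (Or.inr ⟨h, h1, h2⟩))
  · exact Or.inr (Or.inr (Or.inl ⟨h, h1, h2⟩))

lemma right_sub_frame {B : Box} {p : ℝ × ℝ} (hp : p ∈ B.rightSide) : p ∈ B.frame :=
  ⟨⟨le_of_lt (hp.1 ▸ B.hx), le_of_eq hp.1, hp.2.1, hp.2.2⟩, Or.inr (Or.inl hp.1)⟩

lemma left_sub_frame {B : Box} {p : ℝ × ℝ} (hp : p ∈ B.leftSide) : p ∈ B.frame :=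
  ⟨⟨le_of_eq hp.1.symm, hp.1 ▸ B.hx.le, hp.2.1, hp.2.2⟩, Or.inl hp.1⟩

lemma top_sub_frame {B : Box} {p : ℝ × ℝ} (hp : p ∈ B.topSide) : p ∈ B.frame :=
  ⟨⟨hp.2.1, hp.2.2, hp.1 ▸ B.hy.le, le_of_eq hp.1⟩, Or.inr (Or.inr (Or.inr hp.1))⟩

lemma bottom_sub_frame {B : Box} {p : ℝ × ℝ} (hp : p ∈ B.bottomSide) : p ∈ B.frame :=
  ⟨⟨hp.2.1, hp.2.2, le_of_eq hp.1.symm, hp.1 ▸ B.hy.le⟩, Or.inr (Or.inr (Or.inl hp.1))⟩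

lemma notmem_empty {α : Type*} {s t : Set α} (h : s ∩ t = ∅) {p : α}
    (hs : p ∈ s) (ht : p ∈ t) : False :=
  Set.eq_empty_iff_forall_notMem.mp h p ⟨hs, ht⟩

/-- Key lemma: if the right side of `A` meets the frame of `B` (under the
restrictions), then `A` crosses `B`. -/
lemma cross_of_right {A B : Box}
    (cfAB : A.corners ∩ B.frame = ∅) (cfBA : B.corners ∩ A.frame = ∅)
    (lfAB : A.leftSide ∩ B.frame = ∅)
    (rc : (A.rightSide ∩ B.topSide).Nonempty ∧ (A.rightSide ∩ B.bottomSide).Nonempty) :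
    Cross A B := by
  obtain ⟨⟨q1, hq1r, hq1t⟩, ⟨q2, hq2r, hq2b⟩⟩ := rc
  -- coordinates of q1 : (A.x2, B.y2), q2 : (A.x2, B.y1)
  obtain ⟨e1, hy1a, hy2a⟩ := hq1r
  obtain ⟨e2, hx1b, hx2b⟩ := hq1t
  obtain ⟨e3, hy1c, hy2c⟩ := hq2r
  obtain ⟨e4, hx1d, hx2d⟩ := hq2b
  -- so B.x1 ≤ A.x2 ≤ B.x2, A.y1 ≤ B.y2 ≤ A.y2, A.y1 ≤ B.y1 ≤ A.y2
  rw [e1] at hx1b hx2b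
  rw [e3] at hx1d hx2d
  rw [e2] at hy1a hy2a
  rw [e4] at hy1c hy2c
  -- strictness s3 : B.y2 < A.y2
  have s3 : B.y2 < A.y2 := by
    rcases lt_or_eq_of_le hy2a with h | h
    · exact h
    · exfalso
      refine notmem_empty cfAB (p := (A.x2, A.y2)) ?_ ?_
      · simp [Box.corners]
      · exact top_sub_frame ⟨h.symm, hx1b, hx2b⟩
  have s4 : A.y1 < B.y1 := by
    rcases lt_or_eq_of_le hy1c with h | h
    · exact h
    · exfalso
      refine notmem_empty cfAB (p := (A.x2, A.y1)) ?_ ?_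
      · simp [Box.corners]
      · exact bottom_sub_frame ⟨h, hx1d, hx2d⟩
  have s1 : B.x1 < A.x2 := by
    rcases lt_or_eq_of_le hx1b with h | h
    · exact h
    · exfalso
      refine notmem_empty cfBA (p := (B.x1, B.y2)) ?_ ?_
      · simp [Box.corners]
      · exact right_sub_frame (by exact ⟨h, hy1a, hy2a⟩)
  have s2 : A.x2 < B.x2 := by
    rcases lt_or_eq_of_le hx2b with h | h
    · exact h
    · exfalso
      refine notmem_empty cfBA (p := (B.x2, B.y2)) ?_ ?_
      · simp [Box.corners]
      · exact right_sub_frame (by exact ⟨h.symm, hy1a, hy2a⟩)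
  have s5 : A.x1 < B.x1 := by
    by_contra hcon
    push_neg at hcon   -- B.x1 ≤ A.x1
    refine notmem_empty lfAB (p := (A.x1, B.y1)) ?_ ?_
    · exact ⟨rfl, by linarith, by linarith⟩
    · exact bottom_sub_frame ⟨rfl, hcon, by linarith [A.hx]⟩
  exact ⟨s5, s1, s2, s4, s3⟩

/-- Two horizontal sides at the same height are impossible. -/
lemma horiz_horiz {A B : Box} {p : ℝ × ℝ}
    (cfAB : A.corners ∩ B.frame = ∅) (cfBA : B.corners ∩ A.frame = ∅)
    (hpA : p ∈ A.frame) (hpB : p ∈ B.frame)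
    (hyA : p.2 = A.y1 ∨ p.2 = A.y2) (hyB : p.2 = B.y1 ∨ p.2 = B.y2) : False := by
  obtain ⟨hA1, hA2, hA3, hA4⟩ := frame_region hpA
  obtain ⟨hB1, hB2, hB3, hB4⟩ := frame_region hpB
  rcases le_or_gt B.x1 A.x1 with h | h
  · -- corner of A at (A.x1, p.2) lies on frame of B
    refine notmem_empty cfAB (p := (A.x1, p.2)) ?_ ?_
    · rcases hyA with h' | h' <;> rw [h'] <;> simp [Box.corners]
    · refine mem_frame h (le_trans hA1 hB2) hB3 hB4 ?_
      rcases hyB with h' | h'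
      · exact Or.inr (Or.inr (Or.inl h'))
      · exact Or.inr (Or.inr (Or.inr h'))
  · refine notmem_empty cfBA (p := (B.x1, p.2)) ?_ ?_
    · rcases hyB with h' | h' <;> rw [h'] <;> simp [Box.corners]
    · refine mem_frame h.le (le_trans hB1 hA2) hA3 hA4 ?_
      rcases hyA with h' | h'
      · exact Or.inr (Or.inr (Or.inl h'))
      · exact Or.inr (Or.inr (Or.inr h'))

/-- From a point of intersection of two frames, one crosses the other. -/
lemma cross_or_cross {A B : Box}
    (cfAB : A.corners ∩ B.frame = ∅) (cfBA : B.corners ∩ A.frame = ∅)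
    (lfAB : A.leftSide ∩ B.frame = ∅) (lfBA : B.leftSide ∩ A.frame = ∅)
    (rcAB : (A.rightSide ∩ B.frame).Nonempty →
      (A.rightSide ∩ B.topSide).Nonempty ∧ (A.rightSide ∩ B.bottomSide).Nonempty)
    (rcBA : (B.rightSide ∩ A.frame).Nonempty →
      (B.rightSide ∩ A.topSide).Nonempty ∧ (B.rightSide ∩ A.bottomSide).Nonempty)
    (hne : (A.frame ∩ B.frame).Nonempty) : Cross A B ∨ Cross B A := by
  obtain ⟨p, hpA, hpB⟩ := hne
  rcases frame_cases hpA with h | h | h | h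
  · exact absurd trivial (fun _ => notmem_empty lfAB h hpB)
  · exact Or.inl (cross_of_right cfAB cfBA lfAB (rcAB ⟨p, h, hpB⟩))
  all_goals {
    rcases frame_cases hpB with h' | h' | h' | h'
    · exact absurd trivial (fun _ => notmem_empty lfBA h' hpA)
    · exact Or.inr (cross_of_right cfBA cfAB lfBA (rcBA ⟨p, h', hpA⟩))
    all_goals {
      exfalso
      refine horiz_horiz cfAB cfBA hpA hpB ?_ ?_
      all_goals first
        | exact Or.inl h | exact Or.inr h | exact Or.inl h'.1 | exact Or.inr h'.1
        | exact Or.inl h.1 | exact Or.inr h.1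
    }
  }

end S15

namespace S15V2
end S15V2
namespace S15

/-- Shared vertical coordinate values give a frame intersection point. -/
lemma vert_ne {A B : Box} (hd : A.frame ∩ B.frame = ∅)
    {η : ℝ} (hA1 : A.y1 ≤ η) (hA2 : η ≤ A.y2) (hB1 : B.y1 ≤ η) (hB2 : η ≤ B.y2)
    {xa xb : ℝ} (ha : xa = A.x1 ∨ xa = A.x2) (hb : xb = B.x1 ∨ xb = B.x2) :
    xa ≠ xb := by
  intro he
  refine notmem_empty hd (p := (xa, η)) ?_ ?_
  · refine mem_frame ?_ ?_ hA1 hA2 ?_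
    · rcases ha with h | h <;> rw [h] <;> first | exact le_refl _ | exact A.hx.le
    · rcases ha with h | h <;> rw [h] <;> first | exact le_refl _ | exact A.hx.le
    · rcases ha with h | h
      · exact Or.inl h
      · exact Or.inr (Or.inl h)
  · rw [he]
    refine mem_frame ?_ ?_ hB1 hB2 ?_
    · rcases hb with h | h <;> rw [h] <;> first | exact le_refl _ | exact B.hx.le
    · rcases hb with h | h <;> rw [h] <;> first | exact le_refl _ | exact B.hx.le
    · rcases hb with h | h
      · exact Or.inl h
      · exact Or.inr (Or.inl h)

lemma horiz_ne {A B : Box} (hd : A.frame ∩ B.frame = ∅)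
    {ξ : ℝ} (hA1 : A.x1 ≤ ξ) (hA2 : ξ ≤ A.x2) (hB1 : B.x1 ≤ ξ) (hB2 : ξ ≤ B.x2)
    {ya yb : ℝ} (ha : ya = A.y1 ∨ ya = A.y2) (hb : yb = B.y1 ∨ yb = B.y2) :
    ya ≠ yb := by
  intro he
  refine notmem_empty hd (p := (ξ, ya)) ?_ ?_
  · refine mem_frame hA1 hA2 ?_ ?_ ?_
    · rcases ha with h | h <;> rw [h] <;> first | exact le_refl _ | exact A.hy.le
    · rcases ha with h | h <;> rw [h] <;> first | exact le_refl _ | exact A.hy.le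
    · rcases ha with h | h
      · exact Or.inr (Or.inr (Or.inl h))
      · exact Or.inr (Or.inr (Or.inr h))
  · rw [he]
    refine mem_frame hB1 hB2 ?_ ?_ ?_
    · rcases hb with h | h <;> rw [h] <;> first | exact le_refl _ | exact B.hy.le
    · rcases hb with h | h <;> rw [h] <;> first | exact le_refl _ | exact B.hy.le
    · rcases hb with h | h
      · exact Or.inr (Or.inr (Or.inl h))
      · exact Or.inr (Or.inr (Or.inr h))

/-- Disjoint frames with overlapping x- and y-projections are strictly nested;
auxiliary version assuming `A.x1 < B.x1`, concluding `BIn B A`. -/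
lemma nest_of_disjoint_aux {A B : Box} (hd : A.frame ∩ B.frame = ∅)
    {ξ η : ℝ} (hxA1 : A.x1 ≤ ξ) (hxA2 : ξ ≤ A.x2) (hxB1 : B.x1 ≤ ξ) (hxB2 : ξ ≤ B.x2)
    (hyA1 : A.y1 ≤ η) (hyA2 : η ≤ A.y2) (hyB1 : B.y1 ≤ η) (hyB2 : η ≤ B.y2)
    (hlt : A.x1 < B.x1) : BIn B A := by
  have hVne : ∀ (xa xb : ℝ), (xa = A.x1 ∨ xa = A.x2) → (xb = B.x1 ∨ xb = B.x2) → xa ≠ xb :=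
    fun xa xb ha hb => vert_ne hd hyA1 hyA2 hyB1 hyB2 ha hb
  have hHne : ∀ (ya yb : ℝ), (ya = A.y1 ∨ ya = A.y2) → (yb = B.y1 ∨ yb = B.y2) → ya ≠ yb :=
    fun ya yb ha hb => horiz_ne hd hxA1 hxA2 hxB1 hxB2 ha hb
  have step2 : B.x1 < A.x2 :=
    lt_of_le_of_ne (le_trans hxB1 hxA2) (Ne.symm (hVne A.x2 B.x1 (Or.inr rfl) (Or.inl rfl)))
  have hy1 : A.y1 < B.y1 := by
    rcases lt_or_ge A.y1 B.y1 with h | h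
    · exact h
    · exfalso
      refine notmem_empty hd (p := (B.x1, A.y1)) ?_ ?_
      · exact mem_frame hlt.le step2.le (le_refl _) A.hy.le (Or.inr (Or.inr (Or.inl rfl)))
      · refine mem_frame (le_refl _) B.hx.le h (le_trans hyA1 hyB2) (Or.inl rfl)
  have hy2 : B.y2 < A.y2 := by
    rcases lt_or_ge B.y2 A.y2 with h | h
    · exact h
    · exfalso
      refine notmem_empty hd (p := (B.x1, A.y2)) ?_ ?_
      · exact mem_frame hlt.le step2.le A.hy.le (le_refl _) (Or.inr (Or.inr (Or.inr rfl)))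
      · refine mem_frame (le_refl _) B.hx.le (le_trans hyB1 hyA2) h (Or.inl rfl)
  have hx2 : B.x2 < A.x2 := by
    rcases lt_or_ge B.x2 A.x2 with h | h
    · exact h
    · exfalso
      -- A.x2 < B.x2 (≠) : point (A.x2, B.y1) on right side of A and bottom of B
      have h' : A.x2 < B.x2 := lt_of_le_of_ne h (hVne A.x2 B.x2 (Or.inr rfl) (Or.inr rfl))
      refine notmem_empty hd (p := (A.x2, B.y1)) ?_ ?_
      · exact mem_frame A.hx.le (le_refl _) hy1.le (le_trans hyB1 hyA2) (Or.inr (Or.inl rfl))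
      · exact mem_frame step2.le h'.le (le_refl _) B.hy.le (Or.inr (Or.inr (Or.inl rfl)))
  exact ⟨hlt, hx2, hy1, hy2⟩

lemma nest_of_disjoint {A B : Box} (hd : A.frame ∩ B.frame = ∅)
    {ξ η : ℝ} (hxA1 : A.x1 ≤ ξ) (hxA2 : ξ ≤ A.x2) (hxB1 : B.x1 ≤ ξ) (hxB2 : ξ ≤ B.x2)
    (hyA1 : A.y1 ≤ η) (hyA2 : η ≤ A.y2) (hyB1 : B.y1 ≤ η) (hyB2 : η ≤ B.y2) :
    BIn A B ∨ BIn B A := by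
  have hne : A.x1 ≠ B.x1 :=
    vert_ne hd hyA1 hyA2 hyB1 hyB2 (Or.inl rfl) (Or.inl rfl)
  rcases lt_or_gt_of_ne hne with h | h
  · exact Or.inr (nest_of_disjoint_aux hd hxA1 hxA2 hxB1 hxB2 hyA1 hyA2 hyB1 hyB2 h)
  · have hd' : B.frame ∩ A.frame = ∅ := by rw [Set.inter_comm]; exact hd
    exact Or.inl (nest_of_disjoint_aux hd' hxB1 hxB2 hxA1 hxA2 hyB1 hyB2 hyA1 hyA2 h)

/-- A crossing pair has common x- and y-projection points. -/
lemma cross_common {A B : Box} (h : Cross A B) :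
    (A.x1 ≤ B.x1 ∧ B.x1 ≤ A.x2 ∧ B.x1 ≤ B.x1 ∧ B.x1 ≤ B.x2) ∧
    (A.y1 ≤ B.y1 ∧ B.y1 ≤ A.y2 ∧ B.y1 ≤ B.y1 ∧ B.y1 ≤ B.y2) := by
  obtain ⟨h1, h2, h3, h4, h5⟩ := h
  refine ⟨⟨h1.le, h2.le, le_refl _, B.hx.le⟩, ⟨h4.le, ?_, le_refl _, B.hy.le⟩⟩
  exact le_trans B.hy.le (le_trans h5.le (le_refl _))

/-- Propagation: a box nested in `W` whose frame crosses the frame of another box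
disjoint from `W`'s frame forces the other box inside `W` as well. -/
lemma bin_step {Z Z' W : Box} (hIn : BIn Z W) (hc : Cross Z' Z ∨ Cross Z Z')
    (hd : Z'.frame ∩ W.frame = ∅) : BIn Z' W := by
  obtain ⟨hw1, hw2, hw3, hw4⟩ := hIn
  -- common projection point of Z' and Z, hence of Z' and W
  have hcom : ∃ ξ η : ℝ, (Z'.x1 ≤ ξ ∧ ξ ≤ Z'.x2 ∧ Z.x1 ≤ ξ ∧ ξ ≤ Z.x2) ∧
      (Z'.y1 ≤ η ∧ η ≤ Z'.y2 ∧ Z.y1 ≤ η ∧ η ≤ Z.y2) := by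
    rcases hc with h | h
    · obtain ⟨⟨a1, a2, a3, a4⟩, ⟨b1, b2, b3, b4⟩⟩ := cross_common h
      exact ⟨Z.x1, Z.y1, ⟨a1, a2, a3, a4⟩, ⟨b1, b2, b3, b4⟩⟩
    · obtain ⟨⟨a1, a2, a3, a4⟩, ⟨b1, b2, b3, b4⟩⟩ := cross_common h
      exact ⟨Z'.x1, Z'.y1, ⟨a3, a4, a1, a2⟩, ⟨b3, b4, b1, b2⟩⟩
  obtain ⟨ξ, η, ⟨a1, a2, a3, a4⟩, ⟨b1, b2, b3, b4⟩⟩ := hcom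
  have := nest_of_disjoint hd a1 a2 (by linarith) (by linarith) b1 b2 (by linarith) (by linarith)
  rcases this with h | h
  · exact h
  · -- W nested in Z' : impossible with Z ⊂ W and Z, Z' crossing
    exfalso
    obtain ⟨c1, c2, c3, c4⟩ := h
    rcases hc with hcr | hcr
    · obtain ⟨e1, e2, e3, e4, e5⟩ := hcr; linarith
    · obtain ⟨e1, e2, e3, e4, e5⟩ := hcr; linarith

end S15


namespace S15

open SimpleGraph Walk

variable {V : Type} {G : SimpleGraph V}

lemma getVert_inj {u v : V} {p : G.Walk u v} (hp : p.IsPath) :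
    ∀ {i j : ℕ}, i ≤ p.length → j ≤ p.length → p.getVert i = p.getVert j → i = j := by
  induction p with
  | nil => intro i j hi hj _; simp at hi hj; omega
  | cons h q ih =>
    intro i j hi hj hij
    match i, j with
    | 0, 0 => rfl
    | 0, (j+1) =>
      exfalso
      rw [Walk.getVert_zero, Walk.getVert_cons_succ] at hij
      have hmem : q.getVert j ∈ q.support :=
        Walk.mem_support_iff_exists_getVert.mpr ⟨j, rfl, by simpa using hj⟩
      rw [← hij] at hmem
      exact ((Walk.cons_isPath_iff _ _).mp hp).2 hmem
    | (i+1), 0 =>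
      exfalso
      rw [Walk.getVert_zero, Walk.getVert_cons_succ] at hij
      have hmem : q.getVert i ∈ q.support :=
        Walk.mem_support_iff_exists_getVert.mpr ⟨i, rfl, by simpa using hi⟩
      rw [hij] at hmem
      exact ((Walk.cons_isPath_iff _ _).mp hp).2 hmem
    | (i+1), (j+1) =>
      have := ih ((Walk.cons_isPath_iff _ _).mp hp).1 (by simpa using hi) (by simpa using hj)
        (by simpa [Walk.getVert_cons_succ] using hij)
      omega

lemma mem_edges_getVert {u v : V} {p : G.Walk u v} {e : Sym2 V} (he : e ∈ p.edges) :
    ∃ m, m < p.length ∧ e = s(p.getVert m, p.getVert (m + 1)) := by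
  induction p with
  | nil => simp at he
  | cons h q ih =>
    rw [Walk.edges_cons] at he
    rcases List.mem_cons.mp he with h' | h'
    · exact ⟨0, by simp, by simpa [Walk.getVert_zero, Walk.getVert_cons_succ] using h'⟩
    · obtain ⟨m, hm, hme⟩ := ih h'
      exact ⟨m + 1, by simpa using Nat.succ_lt_succ hm,
        by simpa [Walk.getVert_cons_succ] using hme⟩

lemma getVert_mem_support {u v : V} (p : G.Walk u v) {n : ℕ} (hn : n ≤ p.length) :
    p.getVert n ∈ p.support :=
  Walk.mem_support_iff_exists_getVert.mpr ⟨n, rfl, hn⟩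

section split
variable [DecidableEq V]

lemma takeUntil_dropUntil_eq {u v z : V} {p : G.Walk u v} (hp : p.IsPath)
    (hz : z ∈ p.support) {y : V}
    (h1 : y ∈ (p.takeUntil z hz).support) (h2 : y ∈ (p.dropUntil z hz).support) : y = z := by
  have hspec := p.take_spec hz
  have hnodup : ((p.takeUntil z hz).support ++ (p.dropUntil z hz).support.tail).Nodup := by
    have := hp.support_nodup
    rw [← hspec, Walk.support_append] at this
    exact this
  have hdisj := List.disjoint_of_nodup_append hnodup
  rcases List.mem_cons.mp ((Walk.support_eq_cons (p.dropUntil z hz)) ▸ h2) with h | h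
  · exact h
  · exact absurd (hdisj h1 h) not_false

lemma edges_split {u v z : V} {p : G.Walk u v} (hz : z ∈ p.support) {e : Sym2 V}
    (he : e ∈ p.edges) : e ∈ (p.takeUntil z hz).edges ∨ e ∈ (p.dropUntil z hz).edges := by
  have hspec := p.take_spec hz
  rw [← hspec, Walk.edges_append] at he
  exact List.mem_append.mp he

lemma no_edge_across {u v z : V} {p : G.Walk u v} (hp : p.IsPath) (hz : z ∈ p.support)
    {x y : V} (hx : x ∈ (p.takeUntil z hz).support) (hxz : x ≠ z)
    (hy : y ∈ (p.dropUntil z hz).support) (hyz : y ≠ z)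
    (he : s(x, y) ∈ p.edges) : False := by
  rcases edges_split hz he with h | h
  · have : y ∈ (p.takeUntil z hz).support := Walk.snd_mem_support_of_mem_edges _ h
    exact hyz (takeUntil_dropUntil_eq hp hz this hy)
  · have : x ∈ (p.dropUntil z hz).support := Walk.fst_mem_support_of_mem_edges _ h
    exact hxz (takeUntil_dropUntil_eq hp hz hx this)

end split

lemma edge_getVert_mem {u v : V} (p : G.Walk u v) {m : ℕ} (hm : m < p.length) :
    s(p.getVert m, p.getVert (m + 1)) ∈ p.edges := by
  induction p generalizing m with
  | nil => simp at hm
  | cons h q ih =>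
    match m with
    | 0 =>
      simp only [Walk.edges_cons, Walk.getVert_cons_succ, Walk.getVert_zero]
      exact List.mem_cons_self
    | (m+1) =>
      have hm' : m < q.length := by rw [Walk.length_cons] at hm; omega
      rw [Walk.edges_cons]
      refine List.mem_cons_of_mem _ ?_
      simpa [Walk.getVert_cons_succ] using ih hm'

end S15



namespace S15

open SimpleGraph Walk

variable {V W : Type} {G : Multigraph V} {H : SimpleGraph W}

section subdiv
variable (S : MultiSubdivision G H 2)

lemma path_len (u v : V) (i : Fin (G.m u v)) : 3 ≤ (S.path u v i).length := S.length_le u v i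

lemma f_endpoint {u v : V} {i : Fin (G.m u v)} {z : V}
    (h : S.f z ∈ (S.path u v i).support) : S.f z = S.f u ∨ S.f z = S.f v := by
  by_contra hc
  push_neg at hc
  exact S.interior_avoid u v i z ⟨h, hc.1, hc.2⟩

lemma interior_of_not_f {u v : V} {i : Fin (G.m u v)} {x : W}
    (hx : x ∈ (S.path u v i).support) (hnf : ∀ z : V, S.f z ≠ x) :
    x ∈ walkInterior (S.path u v i) :=
  ⟨hx, fun h => hnf u h.symm, fun h => hnf v h.symm⟩

lemma same_path {u v u' v' : V} {i : Fin (G.m u v)} {i' : Fin (G.m u' v')} {x : W}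
    (hx : x ∈ (S.path u v i).support) (hx' : x ∈ (S.path u' v' i').support)
    (hnf : ∀ z : V, S.f z ≠ x) :
    (u = u' ∧ v = v' ∧ (i : ℕ) = (i' : ℕ)) ∨ (u = v' ∧ v = u' ∧ (i : ℕ) = (i' : ℕ)) :=
  S.interior_disjoint u v i u' v' i'
    ⟨x, interior_of_not_f S hx hnf, interior_of_not_f S hx' hnf⟩

lemma edge_path {x y : W} (h : H.Adj x y) :
    ∃ (u v : V) (i : Fin (G.m u v)), s(x, y) ∈ (S.path u v i).edges :=
  S.edge_cover s(x, y) h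

lemma f_pos {u v : V} {i : Fin (G.m u v)} {z : V} {m : ℕ}
    (hm : m ≤ (S.path u v i).length) (h : (S.path u v i).getVert m = S.f z) :
    m = 0 ∨ m = (S.path u v i).length := by
  have hmem : S.f z ∈ (S.path u v i).support := h ▸ getVert_mem_support _ hm
  rcases f_endpoint S hmem with h' | h'
  · left
    exact getVert_inj (S.isPath u v i) hm (Nat.zero_le _)
      ((h.trans h').trans (Walk.getVert_zero _).symm)
  · right
    exact getVert_inj (S.isPath u v i) hm (le_refl _)
      ((h.trans h').trans (Walk.getVert_length _).symm)

lemma not_adj_ff (z z' : V) : ¬ H.Adj (S.f z) (S.f z') := by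
  intro h
  obtain ⟨u, v, i, he⟩ := edge_path S h
  obtain ⟨m, hm, hme⟩ := mem_edges_getVert he
  have h3 := path_len S u v i
  rcases Sym2.eq_iff.mp hme with ⟨ha, hb⟩ | ⟨ha, hb⟩
  · have p1 := f_pos S (le_of_lt hm) ha.symm
    have p2 := f_pos S hm hb.symm
    omega
  · have p1 := f_pos S (le_of_lt hm) hb.symm
    have p2 := f_pos S hm ha.symm
    omega

lemma edge_at_interior {u v : V} {i : Fin (G.m u v)} {x y : W}
    (hx : x ∈ (S.path u v i).support) (hnf : ∀ z : V, S.f z ≠ x) (hadj : H.Adj x y) :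
    s(x, y) ∈ (S.path u v i).edges := by
  obtain ⟨u', v', i', he⟩ := edge_path S hadj
  have hx' : x ∈ (S.path u' v' i').support := Walk.fst_mem_support_of_mem_edges _ he
  rcases same_path S hx hx' hnf with ⟨h1, h2, h3⟩ | ⟨h1, h2, h3⟩
  · subst h1; subst h2
    have : i = i' := Fin.ext h3
    subst this; exact he
  · subst h1; subst h2
    have hcast : (Fin.cast (G.symm u v) i : Fin (G.m v u)) = i' := Fin.ext (by simpa using h3)
    have hsymm := S.path_symm u v i
    rw [hcast] at hsymm
    rw [hsymm, Walk.edges_reverse, List.mem_reverse] at he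
    exact he

lemma pivot {x y z : W} (hnf : ∀ c, S.f c ≠ x)
    (h1 : H.Adj x y) (h2 : H.Adj y z) (h3 : H.Adj x z) : False := by
  obtain ⟨u, v, i, he⟩ := edge_path S h1
  have hx : x ∈ (S.path u v i).support := Walk.fst_mem_support_of_mem_edges _ he
  have hy : y ∈ (S.path u v i).support := Walk.snd_mem_support_of_mem_edges _ he
  have hez : s(x, z) ∈ (S.path u v i).edges := edge_at_interior S hx hnf h3
  have hz : z ∈ (S.path u v i).support := Walk.snd_mem_support_of_mem_edges _ hez
  have heyz : s(y, z) ∈ (S.path u v i).edges := by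
    by_cases hyf : ∀ c, S.f c ≠ y
    · exact edge_at_interior S hy hyf h2
    · by_cases hzf : ∀ c, S.f c ≠ z
      · have h' := edge_at_interior S hz hzf h2.symm
        rwa [Sym2.eq_swap] at h'
      · push_neg at hyf hzf
        obtain ⟨c, hc⟩ := hyf
        obtain ⟨d, hd⟩ := hzf
        rw [← hc, ← hd] at h2
        exact absurd h2 (not_adj_ff S c d)
  have hp := S.isPath u v i
  obtain ⟨m1, hm1, he1⟩ := mem_edges_getVert he
  obtain ⟨m2, hm2, he2⟩ := mem_edges_getVert hez
  obtain ⟨m3, hm3, he3⟩ := mem_edges_getVert heyz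
  have inj : ∀ {a b : ℕ}, a ≤ (S.path u v i).length → b ≤ (S.path u v i).length →
      (S.path u v i).getVert a = (S.path u v i).getVert b → a = b :=
    fun ha hb h => getVert_inj hp ha hb h
  rcases Sym2.eq_iff.mp he1 with ⟨hx1, hy1⟩ | ⟨hx1, hy1⟩ <;>
  rcases Sym2.eq_iff.mp he2 with ⟨hx2, hz2⟩ | ⟨hx2, hz2⟩ <;>
  rcases Sym2.eq_iff.mp he3 with ⟨hy3, hz3⟩ | ⟨hy3, hz3⟩ <;>
  · have q1 := inj (by omega) (by omega) (hx1.symm.trans hx2)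
    have q2 := inj (by omega) (by omega) (hy1.symm.trans hy3)
    have q3 := inj (by omega) (by omega) (hz2.symm.trans hz3)
    omega

include S in
lemma no_triangle {x y z : W} (h1 : H.Adj x y) (h2 : H.Adj y z) (h3 : H.Adj x z) : False := by
  by_cases hx : ∀ c, S.f c ≠ x
  · exact pivot S hx h1 h2 h3
  by_cases hy : ∀ c, S.f c ≠ y
  · exact pivot S hy h1.symm h3 h2
  by_cases hz : ∀ c, S.f c ≠ z
  · exact pivot S hz h3.symm h1 h2.symm
  push_neg at hx hy
  obtain ⟨c, hc⟩ := hx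
  obtain ⟨d, hd⟩ := hy
  rw [← hc, ← hd] at h1
  exact absurd h1 (not_adj_ff S c d)

end subdiv
end S15



namespace S15

open SimpleGraph Walk

variable {V W : Type} {G : Multigraph V} {H : SimpleGraph W}

/-- The closed neighborhood, as used for propagation. -/
def NSet (H : SimpleGraph W) (w : W) : Set W := {y | y = w ∨ H.Adj w y}

/-- The vertex set of the cycle formed by the paths subdividing the digon `ab`. -/
def Cset (S : MultiSubdivision G H 2) (a b : V) : Set W :=
  {x | ∃ i : Fin (G.m a b), x ∈ (S.path a b i).support}

section digon
variable (S : MultiSubdivision G H 2)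

lemma mem_cset_rev {a b : V} {i' : Fin (G.m b a)} {x : W}
    (h : x ∈ (S.path b a i').support) : x ∈ Cset S a b := by
  have hsymm := S.path_symm a b (Fin.cast (G.symm b a) i')
  have hcast : (Fin.cast (G.symm a b) (Fin.cast (G.symm b a) i')) = i' := Fin.ext rfl
  rw [hcast] at hsymm
  refine ⟨Fin.cast (G.symm b a) i', ?_⟩
  rw [hsymm, Walk.support_reverse, List.mem_reverse] at h
  exact h

lemma cset_disj {a b c d : V} (hca : c ≠ a) (hcb : c ≠ b) (hda : d ≠ a) (hdb : d ≠ b)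
    {i : Fin (G.m c d)} {x : W} (hx : x ∈ Cset S a b)
    (hx' : x ∈ (S.path c d i).support) : False := by
  obtain ⟨j, hj⟩ := hx
  by_cases hnf : ∀ z : V, S.f z ≠ x
  · rcases same_path S hj hx' hnf with ⟨h1, h2, -⟩ | ⟨h1, h2, -⟩
    · exact hca h1.symm
    · exact hda h1.symm
  · push_neg at hnf
    obtain ⟨z, hz⟩ := hnf
    rw [← hz] at hj hx'
    have e1 := f_endpoint S hj
    have e2 := f_endpoint S hx'
    rcases e1 with h | h <;> rcases e2 with h' | h' <;>
      first
        | exact hca (S.f.injective (h'.symm.trans h))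
        | exact hcb (S.f.injective (h'.symm.trans h))
        | exact hda (S.f.injective (h'.symm.trans h))
        | exact hdb (S.f.injective (h'.symm.trans h))

lemma adj_to_C {a b : V} {w y : W} (hw : w ∈ Cset S a b) (h : H.Adj w y) :
    y ∈ Cset S a b ∨
    ∃ (e u' v' : V) (i' : Fin (G.m u' v')), (e = a ∨ e = b) ∧ w = S.f e ∧
      (u' = e ∨ v' = e) ∧ y ∈ (S.path u' v' i').support ∧ (∀ z : V, S.f z ≠ y) := by
  obtain ⟨u', v', i', he⟩ := edge_path S h
  have hwR : w ∈ (S.path u' v' i').support := Walk.fst_mem_support_of_mem_edges _ he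
  have hyR : y ∈ (S.path u' v' i').support := Walk.snd_mem_support_of_mem_edges _ he
  obtain ⟨j, hj⟩ := hw
  by_cases hnf : ∀ z : V, S.f z ≠ w
  · left
    rcases same_path S hj hwR hnf with ⟨h1, h2, -⟩ | ⟨h1, h2, -⟩
    · subst h1; subst h2; exact ⟨i', hyR⟩
    · subst h1; subst h2; exact mem_cset_rev S hyR
  · push_neg at hnf
    obtain ⟨z, hz⟩ := hnf
    right
    have hze : z = a ∨ z = b := by
      rw [← hz] at hj
      rcases f_endpoint S hj with h' | h'
      · exact Or.inl (S.f.injective h')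
      · exact Or.inr (S.f.injective h')
    have hy_nf : ∀ c : V, S.f c ≠ y := by
      intro c hc
      rw [← hz, ← hc] at h
      exact not_adj_ff S z c h
    have hend : u' = z ∨ v' = z := by
      rw [← hz] at hwR
      rcases f_endpoint S hwR with h' | h'
      · exact Or.inl (S.f.injective h').symm
      · exact Or.inr (S.f.injective h').symm
    exact ⟨z, u', v', i', hze, hz.symm, hend, hyR, hy_nf⟩

lemma avoid_far {a b : V} {w : W} (hw : w ∈ Cset S a b) {c d : V}
    (hca : c ≠ a) (hcb : c ≠ b) (hda : d ≠ a) (hdb : d ≠ b) {i : Fin (G.m c d)} :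
    ∀ y ∈ (S.path c d i).support, y ∉ NSet H w := by
  intro y hy hns
  rcases hns with rfl | hadj
  · exact cset_disj S hca hcb hda hdb hw hy
  rcases adj_to_C S hw hadj with hC | ⟨e, u', v', i', he, -, hend, hyR, hynf⟩
  · exact cset_disj S hca hcb hda hdb hC hy
  · rcases same_path S hyR hy hynf with ⟨h1, h2, -⟩ | ⟨h1, h2, -⟩
    · rcases hend with rfl | rfl <;> rcases he with rfl | rfl
      · exact hca h1.symm
      · exact hcb h1.symm
      · exact hda h2.symm
      · exact hdb h2.symm
    · rcases hend with rfl | rfl <;> rcases he with rfl | rfl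
      · exact hda h1.symm
      · exact hdb h1.symm
      · exact hca h2.symm
      · exact hcb h2.symm

lemma avoid_first {a b : V} {w : W} (hw : w ∈ Cset S a b) {x' c : V}
    (hca : c ≠ a) (hcb : c ≠ b) (hfx : S.f x' ∉ NSet H w) {i : Fin (G.m x' c)} :
    ∀ y ∈ (S.path x' c i).support, y ∉ NSet H w := by
  intro y hy hns
  have hmemw : w ∈ NSet H w := Or.inl rfl
  rcases hns with rfl | hadj
  · -- y = w on the path x'c
    obtain ⟨j, hj⟩ := hw
    by_cases hnf : ∀ z : V, S.f z ≠ y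
    · rcases same_path S hj hy hnf with ⟨-, h2, -⟩ | ⟨h1, -, -⟩
      · exact hcb h2.symm
      · exact hca h1.symm
    · push_neg at hnf
      obtain ⟨z, hz⟩ := hnf
      rcases f_endpoint S (hz ▸ hy) with h' | h'
      · -- y = f x'
        exact hfx (by rw [h'.symm.trans hz]; exact hmemw)
      · -- y = f c ∈ Cset : c ∈ {a, b}, contradiction
        obtain ⟨zz, hzz⟩ : ∃ zz, S.f zz = y := ⟨z, hz⟩
        rw [← hz, h'] at hj
        rcases f_endpoint S hj with h'' | h''
        · exact hca (S.f.injective h'')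
        · exact hcb (S.f.injective h'')
  rcases adj_to_C S hw hadj with hC | ⟨e, u', v', i', he, hwfe, hend, hyR, hynf⟩
  · -- y ∈ Cset ∩ path x'c : y = f x' or contradiction
    obtain ⟨j, hj⟩ := hC
    by_cases hnf : ∀ z : V, S.f z ≠ y
    · rcases same_path S hj hy hnf with ⟨-, h2, -⟩ | ⟨h1, -, -⟩
      · exact hcb h2.symm
      · exact hca h1.symm
    · push_neg at hnf
      obtain ⟨z, hz⟩ := hnf
      rcases f_endpoint S (hz ▸ hy) with h' | h'
      · rw [← hz, h'] at hadj
        exact hfx (Or.inr hadj)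
      · rw [← hz, h'] at hj
        rcases f_endpoint S hj with h'' | h''
        · exact hca (S.f.injective h'')
        · exact hcb (S.f.injective h'')
  · -- y interior of path R incident to e ∈ {a,b} and on path x'c : forces e = x'
    rcases same_path S hyR hy hynf with ⟨h1, h2, -⟩ | ⟨h1, h2, -⟩
    · rcases hend with rfl | rfl
      · -- u' = e, u' = x'
        rcases he with rfl | rfl <;>
        · have hxw : S.f x' = w := by rw [← h1]; exact hwfe.symm
          exact hfx (by rw [hxw]; exact hmemw)
      · rcases he with rfl | rfl
        · exact hca h2.symm
        · exact hcb h2.symm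
    · rcases hend with rfl | rfl
      · rcases he with rfl | rfl
        · exact hca h1.symm
        · exact hcb h1.symm
      · rcases he with rfl | rfl <;>
        · have hxw : S.f x' = w := by rw [← h2]; exact hwfe.symm
          exact hfx (by rw [hxw]; exact hmemw)

end digon
end S15



namespace S15

open SimpleGraph Walk

variable {V W : Type} {G : Multigraph V} {H : SimpleGraph W}

section digon2
variable (S : MultiSubdivision G H 2)

lemma nonf_getVert {u v : V} {i : Fin (G.m u v)} {k : ℕ} (hk1 : 1 ≤ k)
    (hk2 : k ≤ (S.path u v i).length - 1) : ∀ z : V, S.f z ≠ (S.path u v i).getVert k := by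
  intro z hz
  have h3 := path_len S u v i
  have := f_pos S (m := k) (by omega) hz.symm
  omega

lemma two_nbrs {a b : V} (hab : a ≠ b) (hm2 : G.m a b = 2) {t : W} (ht : t ∈ Cset S a b) :
    ∃ r s : W, r ∈ Cset S a b ∧ s ∈ Cset S a b ∧ r ≠ s ∧ H.Adj t r ∧ H.Adj t s := by
  obtain ⟨j, hj⟩ := ht
  obtain ⟨k, hkt, hk⟩ := Walk.mem_support_iff_exists_getVert.mp hj
  have h3 := path_len S a b j
  have hpj := S.isPath a b j
  by_cases hmid : 1 ≤ k ∧ k ≤ (S.path a b j).length - 1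
  · -- interior position : the two path neighbours
    refine ⟨(S.path a b j).getVert (k - 1), (S.path a b j).getVert (k + 1),
      ⟨j, getVert_mem_support _ (by omega)⟩, ⟨j, getVert_mem_support _ (by omega)⟩, ?_, ?_, ?_⟩
    · intro he
      have := getVert_inj hpj (i := k - 1) (j := k + 1) (by omega) (by omega) he
      omega
    · have h' := (S.path a b j).adj_getVert_succ (i := k - 1) (by omega)
      have hrw : k - 1 + 1 = k := by omega
      rw [hrw, hkt] at h'
      exact h'.symm
    · have h' := (S.path a b j).adj_getVert_succ (i := k) (by omega)
      rw [hkt] at h'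
      exact h'
  · let i0 : Fin (G.m a b) := ⟨0, by omega⟩
    let i1 : Fin (G.m a b) := ⟨1, by omega⟩
    have h30 := path_len S a b i0
    have h31 := path_len S a b i1
    have hne01 : ((i0 : ℕ) : ℕ) ≠ ((i1 : ℕ) : ℕ) := by simp [i0, i1]
    rcases (by omega : k = 0 ∨ k = (S.path a b j).length) with hk0 | hkL
    · -- t = f a
      have hta : t = S.f a := by rw [← hkt, hk0, Walk.getVert_zero]
      refine ⟨(S.path a b i0).getVert 1, (S.path a b i1).getVert 1,
        ⟨i0, getVert_mem_support _ (by omega)⟩, ⟨i1, getVert_mem_support _ (by omega)⟩,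
        ?_, ?_, ?_⟩
      · intro he
        have hnf := nonf_getVert S (u := a) (v := b) (i := i0) (k := 1) le_rfl (by omega)
        have hmem1 : (S.path a b i0).getVert 1 ∈ (S.path a b i1).support := by
          rw [he]; exact getVert_mem_support _ (by omega)
        rcases same_path S (getVert_mem_support _ (by omega : 1 ≤ (S.path a b i0).length))
          hmem1 hnf with ⟨-, -, hii⟩ | ⟨hba, -, -⟩
        · exact hne01 hii
        · exact hab hba
      · have h' := (S.path a b i0).adj_getVert_succ (i := 0) (by omega)
        rw [Walk.getVert_zero] at h'
        rw [hta]
        exact h'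
      · have h' := (S.path a b i1).adj_getVert_succ (i := 0) (by omega)
        rw [Walk.getVert_zero] at h'
        rw [hta]
        exact h'
    · -- t = f b
      have htb : t = S.f b := by rw [← hkt, hkL, Walk.getVert_length]
      refine ⟨(S.path a b i0).getVert ((S.path a b i0).length - 1),
        (S.path a b i1).getVert ((S.path a b i1).length - 1),
        ⟨i0, getVert_mem_support _ (by omega)⟩, ⟨i1, getVert_mem_support _ (by omega)⟩,
        ?_, ?_, ?_⟩
      · intro he
        have hnf := nonf_getVert S (u := a) (v := b) (i := i0)
          (k := (S.path a b i0).length - 1) (by omega) (by omega)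
        have hmem1 : (S.path a b i0).getVert ((S.path a b i0).length - 1) ∈
            (S.path a b i1).support := by
          rw [he]; exact getVert_mem_support _ (by omega)
        rcases same_path S (getVert_mem_support _ (by omega)) hmem1 hnf with
          ⟨-, -, hii⟩ | ⟨hba, -, -⟩
        · exact hne01 hii
        · exact hab hba
      · have h' := (S.path a b i0).adj_getVert_succ (i := (S.path a b i0).length - 1) (by omega)
        have hrw : (S.path a b i0).length - 1 + 1 = (S.path a b i0).length := by omega
        rw [hrw, Walk.getVert_length] at h'
        rw [htb]
        exact h'.symm
      · have h' := (S.path a b i1).adj_getVert_succ (i := (S.path a b i1).length - 1) (by omega)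
        have hrw : (S.path a b i1).length - 1 + 1 = (S.path a b i1).length := by omega
        rw [hrw, Walk.getVert_length] at h'
        rw [htb]
        exact h'.symm

end digon2
end S15



namespace S15

open SimpleGraph Walk

variable {V W : Type} {G : Multigraph V} {H : SimpleGraph W}

lemma adj_cross {F : W → Box} (hF : IsFrameRepresentation H F) {u v : W} (h : H.Adj u v) :
    Cross (F u) (F v) ∨ Cross (F v) (F u) :=
  cross_or_cross (hF.corner_free u v h.ne) (hF.corner_free v u h.ne.symm)
    (hF.left_free u v h.ne) (hF.left_free v u h.ne.symm)
    (hF.right_cross u v h.ne) (hF.right_cross v u h.ne.symm)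
    ((hF.adj_iff u v h.ne).mp h)

lemma nonadj_disj {F : W → Box} (hF : IsFrameRepresentation H F) {u v : W}
    (hne : u ≠ v) (h : ¬ H.Adj u v) : (F u).frame ∩ (F v).frame = ∅ :=
  Set.not_nonempty_iff_eq_empty.mp (fun hn => h ((hF.adj_iff u v hne).mpr hn))

lemma propagate {F : W → Box} (hF : IsFrameRepresentation H F) {w : W} {x y : W}
    (q : H.Walk x y) (hav : ∀ z ∈ q.support, z ∉ NSet H w)
    (hIn : BIn (F x) (F w)) : BIn (F y) (F w) := by
  induction q with
  | nil => exact hIn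
  | @cons x' m y' h q' ih =>
    have hm : m ∈ (Walk.cons h q').support := by
      rw [Walk.support_cons]
      exact List.mem_cons_of_mem _ q'.start_mem_support
    have hnm := hav m hm
    have hnadj : ¬ H.Adj w m := fun hc => hnm (Or.inr hc)
    have hnem : m ≠ w := fun hc => hnm (Or.inl hc)
    have hd : (F m).frame ∩ (F w).frame = ∅ :=
      nonadj_disj hF hnem (fun hc => hnadj hc.symm)
    have hc := adj_cross hF h
    have hIn' : BIn (F m) (F w) := bin_step hIn (Or.symm hc) hd
    refine ih ?_ hIn'
    intro z hz
    exact hav z (by rw [Walk.support_cons]; exact List.mem_cons_of_mem _ hz)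

section seed
variable (S : MultiSubdivision G H 2)

lemma seed [Fintype W] {F : W → Box} (hF : IsFrameRepresentation H F)
    {a b : V} (hab : a ≠ b) (hm2 : G.m a b = 2) :
    ∃ zin wout : W, zin ∈ Cset S a b ∧ wout ∈ Cset S a b ∧ zin ≠ wout ∧
      ¬ H.Adj wout zin ∧ ¬ H.Adj zin wout ∧ BIn (F zin) (F wout) := by
  have hCne : (Cset S a b).Nonempty := by
    exact ⟨S.f a, ⟨⟨0, by omega⟩, Walk.start_mem_support _⟩⟩
  obtain ⟨t, htC, htmax'⟩ := Set.Finite.exists_maximalFor (fun w => (F w).x1)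
    (Cset S a b) (Set.toFinite _) hCne
  have htmax : ∀ r ∈ Cset S a b, (F t).x1 ≤ (F r).x1 → (F t).x1 = (F r).x1 :=
    fun r hr h => le_antisymm h (htmax' hr h)
  obtain ⟨r, s, hrC, hsC, hrs, har, has⟩ := two_nbrs S hab hm2 htC
  have hcr : Cross (F r) (F t) := by
    rcases adj_cross hF har with h | h
    · exfalso
      have := htmax r hrC (le_of_lt h.1)
      exact (ne_of_lt h.1) this
    · exact h
  have hcs : Cross (F s) (F t) := by
    rcases adj_cross hF has with h | h
    · exfalso
      have := htmax s hsC (le_of_lt h.1)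
      exact (ne_of_lt h.1) this
    · exact h
  have hnadj : ¬ H.Adj r s := fun hadj => no_triangle S har hadj has
  have hd : (F r).frame ∩ (F s).frame = ∅ := nonadj_disj hF hrs hnadj
  obtain ⟨c1, c2, c3, c4, c5⟩ := hcr
  obtain ⟨d1, d2, d3, d4, d5⟩ := hcs
  have hnest := nest_of_disjoint (A := F r) (B := F s) hd
    (ξ := (F t).x1) (η := (F t).y1)
    c1.le c2.le d1.le d2.le c4.le (by linarith [(F t).hy]) d4.le (by linarith [(F t).hy])
  rcases hnest with h | h
  · exact ⟨r, s, hrC, hsC, hrs, fun hc => hnadj hc.symm, hnadj, h⟩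
  · exact ⟨s, r, hsC, hrC, hrs.symm, hnadj, fun hc => hnadj hc.symm, h⟩

end seed
end S15



namespace S15

open SimpleGraph Walk

variable {V W : Type} {G : Multigraph V} {H : SimpleGraph W}

section arc
variable (S : MultiSubdivision G H 2)

lemma not_both_branches {a b : V} (hab : a ≠ b) {w : W} (hnf : ∀ c : V, S.f c ≠ w)
    (ha : S.f a ∈ NSet H w) (hb : S.f b ∈ NSet H w) : False := by
  rcases ha with haw | haw
  · exact hnf a haw
  rcases hb with hbw | hbw
  · exact hnf b hbw
  obtain ⟨u, v, i, he⟩ := edge_path S haw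
  have hwR : w ∈ (S.path u v i).support := Walk.fst_mem_support_of_mem_edges _ he
  have he2 : s(w, S.f b) ∈ (S.path u v i).edges := edge_at_interior S hwR hnf hbw
  obtain ⟨m1, hm1, de1⟩ := mem_edges_getVert he
  obtain ⟨m2, hm2, de2⟩ := mem_edges_getVert he2
  have h3 := path_len S u v i
  have inj : ∀ {α β : ℕ}, α ≤ (S.path u v i).length → β ≤ (S.path u v i).length →
      (S.path u v i).getVert α = (S.path u v i).getVert β → α = β :=
    fun hα hβ h => getVert_inj (S.isPath u v i) hα hβ h
  have hvne : ∀ α β : ℕ, S.f a = (S.path u v i).getVert α →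
      S.f b = (S.path u v i).getVert β → α ≠ β := by
    intro α β hA' hB' h
    subst h
    exact hab (S.f.injective (hA'.trans hB'.symm))
  rcases Sym2.eq_iff.mp de1 with ⟨hw1, hA⟩ | ⟨hw1, hA⟩ <;>
  rcases Sym2.eq_iff.mp de2 with ⟨hw2, hB⟩ | ⟨hw2, hB⟩ <;>
  · have hq := inj (by omega) (by omega) (hw1.symm.trans hw2)
    have hpa := f_pos S (by omega) hA.symm
    have hpb := f_pos S (by omega) hB.symm
    have hvv := hvne _ _ hA hB
    omega

lemma arc {a b : V} (hab : a ≠ b) {w z : W}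
    (hw : w ∈ Cset S a b) (hz : z ∈ Cset S a b) (hzw : z ∉ NSet H w) :
    ∃ (e : V) (q : H.Walk z (S.f e)), (e = a ∨ e = b) ∧ ∀ y ∈ q.support, y ∉ NSet H w := by
  classical
  obtain ⟨j, hj⟩ := hz
  have hpj := S.isPath a b j
  have hq1q2 : ∀ y, y ∈ ((S.path a b j).takeUntil z hj).support →
      y ∈ ((S.path a b j).dropUntil z hj).support → y = z :=
    fun y h1 h2 => takeUntil_dropUntil_eq hpj hj h1 h2
  have hsup1 : ∀ y ∈ ((S.path a b j).takeUntil z hj).support, y ∈ (S.path a b j).support :=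
    fun y h => (S.path a b j).support_takeUntil_subset hj h
  have hsup2 : ∀ y ∈ ((S.path a b j).dropUntil z hj).support, y ∈ (S.path a b j).support :=
    fun y h => (S.path a b j).support_dropUntil_subset hj h
  have hstart : S.f a ∈ ((S.path a b j).takeUntil z hj).support := Walk.start_mem_support _
  have hend : S.f b ∈ ((S.path a b j).dropUntil z hj).support := Walk.end_mem_support _
  have hwz : w ≠ z := fun hc => hzw (Or.inl hc.symm)
  have hgoal : (∀ y ∈ ((S.path a b j).takeUntil z hj).support, y ∉ NSet H w) ∨
      (∀ y ∈ ((S.path a b j).dropUntil z hj).support, y ∉ NSet H w) := by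
    by_cases hnf : ∀ c : V, S.f c ≠ w
    · by_cases hwP : w ∈ (S.path a b j).support
      · -- w on the same path as z
        have hwP' := hwP
        rw [← (S.path a b j).take_spec hj, Walk.mem_support_append_iff] at hwP'
        rcases hwP' with hw1 | hw2
        · -- w in the prefix : use the suffix
          right
          intro y hy hyN
          rcases hyN with rfl | hadj
          · exact hwz (hq1q2 y hw1 hy)
          · have hyz : y ≠ z := fun h => hzw (h ▸ Or.inr hadj)
            have hePw : s(w, y) ∈ (S.path a b j).edges := edge_at_interior S hwP hnf hadj
            exact no_edge_across hpj hj hw1 hwz hy hyz hePw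
        · -- w in the suffix : use the prefix
          left
          intro y hy hyN
          rcases hyN with rfl | hadj
          · exact hwz (hq1q2 y hy hw2)
          · have hyz : y ≠ z := fun h => hzw (h ▸ Or.inr hadj)
            have hePw : s(y, w) ∈ (S.path a b j).edges := by
              have := edge_at_interior S hwP hnf hadj
              rwa [Sym2.eq_swap] at this
            exact no_edge_across hpj hj hy hyz hw2 hwz hePw
      · -- w on the other path of the digon
        have hkey : ∀ y, y ∈ (S.path a b j).support → y ∈ NSet H w →
            y = S.f a ∨ y = S.f b := by
          intro y hyP hyN
          rcases hyN with rfl | hadj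
          · exact absurd hyP hwP
          · obtain ⟨l, hl⟩ := hw
            have hePl : s(w, y) ∈ (S.path a b l).edges := edge_at_interior S hl hnf hadj
            have hyPl : y ∈ (S.path a b l).support := Walk.snd_mem_support_of_mem_edges _ hePl
            by_cases hynf : ∀ c : V, S.f c ≠ y
            · rcases same_path S hyP hyPl hynf with ⟨-, -, hjl⟩ | ⟨hba, -, -⟩
              · exfalso
                have hjl' : j = l := Fin.ext hjl
                subst hjl'
                exact hwP (Walk.fst_mem_support_of_mem_edges _ hePl)
              · exact absurd hba hab
            · push_neg at hynf
              obtain ⟨c, hc⟩ := hynf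
              rcases f_endpoint S (u := a) (v := b) (i := j) (z := c) (by rw [hc]; exact hyP) with h' | h'
              · exact Or.inl (by rw [← hc]; exact h')
              · exact Or.inr (by rw [← hc]; exact h')
        by_cases hfa : S.f a ∈ NSet H w
        · have hfb : S.f b ∉ NSet H w := fun hfb => not_both_branches S hab hnf hfa hfb
          right
          intro y hy hyN
          rcases hkey y (hsup2 y hy) hyN with rfl | rfl
          · -- y = f a lies in both pieces, so equals z; but z ∉ NSet
            exact hzw ((hq1q2 _ hstart hy) ▸ hyN)
          · exact hfb hyN
        · left
          intro y hy hyN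
          rcases hkey y (hsup1 y hy) hyN with rfl | rfl
          · exact hfa hyN
          · exact hzw ((hq1q2 _ hy hend) ▸ hyN)
    · -- w is a branch vertex
      push_neg at hnf
      obtain ⟨c, hc⟩ := hnf
      have hcab : c = a ∨ c = b := by
        obtain ⟨l, hl⟩ := hw
        rcases f_endpoint S (u := a) (v := b) (i := l) (z := c) (by rw [hc]; exact hl) with h' | h'
        · exact Or.inl (S.f.injective h')
        · exact Or.inr (S.f.injective h')
      have hynf_of_adj : ∀ y : W, H.Adj w y → ∀ d : V, S.f d ≠ y := by
        intro y hadj d hd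
        rw [← hc, ← hd] at hadj
        exact not_adj_ff S c d hadj
      rcases hcab with rfl | rfl
      · -- w = f a : use the suffix
        right
        intro y hy hyN
        have hfaz : S.f c ≠ z := fun h => hzw (Or.inl (h.symm.trans hc))
        rcases hyN with rfl | hadj
        · -- y = w = f a
          have : y = z := hq1q2 y (by rw [← hc]; exact hstart) hy
          exact hwz this
        · have hyz : y ≠ z := fun h => hzw (h ▸ Or.inr hadj)
          have hynf := hynf_of_adj y hadj
          have heP : s(S.f c, y) ∈ (S.path c b j).edges := by
            have := edge_at_interior S (hsup2 y hy) hynf hadj.symm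
            rw [Sym2.eq_swap] at this
            have hrw : s(S.f c, y) = s(w, y) := by rw [hc]
            rw [hrw]
            exact this
          exact no_edge_across hpj hj hstart hfaz hy hyz heP
      · -- w = f b : use the prefix
        left
        intro y hy hyN
        have hfbz : S.f c ≠ z := fun h => hzw (Or.inl (h.symm.trans hc))
        rcases hyN with rfl | hadj
        · have : y = z := hq1q2 y hy (by rw [← hc]; exact hend)
          exact hwz this
        · have hyz : y ≠ z := fun h => hzw (h ▸ Or.inr hadj)
          have hynf := hynf_of_adj y hadj
          have heP : s(y, S.f c) ∈ (S.path a c j).edges := by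
            have := edge_at_interior S (hsup1 y hy) hynf hadj.symm
            have hrw : s(y, S.f c) = s(y, w) := by rw [hc]
            rw [hrw]
            exact this
          exact no_edge_across hpj hj hy hyz hend hfbz heP
  rcases hgoal with h | h
  · refine ⟨a, ((S.path a b j).takeUntil z hj).reverse, Or.inl rfl, ?_⟩
    intro y hy
    rw [Walk.support_reverse, List.mem_reverse] at hy
    exact h y hy
  · exact ⟨b, (S.path a b j).dropUntil z hj, Or.inr rfl, h⟩

end arc
end S15



namespace S15

open SimpleGraph Walk

variable {V W : Type} {G : Multigraph V} {H : SimpleGraph W}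

/-- Lift a walk of the multigraph to a walk of the subdivision. -/
def liftWalk (S : MultiSubdivision G H 2) : ∀ {x y : V},
    G.support.Walk x y → H.Walk (S.f x) (S.f y)
  | _, _, SimpleGraph.Walk.nil => SimpleGraph.Walk.nil
  | _, _, SimpleGraph.Walk.cons h q => (S.path _ _ ⟨0, h⟩).append (liftWalk S q)

lemma liftWalk_support (S : MultiSubdivision G H 2) {x y : V} (r : G.support.Walk x y) :
    ∀ w' ∈ (liftWalk S r).support,
      (∃ (c d : V) (h : 0 < G.m c d), c ∈ r.support ∧ d ∈ r.support ∧
        w' ∈ (S.path c d ⟨0, h⟩).support) ∨ (w' = S.f x ∧ r.length = 0) := by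
  induction r with
  | nil =>
    intro w' hw'
    right
    refine ⟨?_, rfl⟩
    simpa [liftWalk] using hw'
  | @cons x m y h q ih =>
    intro w' hw'
    rw [show liftWalk S (SimpleGraph.Walk.cons h q) =
      (S.path x m ⟨0, h⟩).append (liftWalk S q) from rfl,
      Walk.mem_support_append_iff] at hw'
    rcases hw' with hw' | hw'
    · exact Or.inl ⟨x, m, h, Walk.start_mem_support _,
        by rw [Walk.support_cons]; exact List.mem_cons_of_mem _ (Walk.start_mem_support _),
        hw'⟩
    · rcases ih w' hw' with ⟨c, d, hcd, hc, hd, hmem⟩ | ⟨heq, hlen⟩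
      · exact Or.inl ⟨c, d, hcd,
          by rw [Walk.support_cons]; exact List.mem_cons_of_mem _ hc,
          by rw [Walk.support_cons]; exact List.mem_cons_of_mem _ hd, hmem⟩
      · refine Or.inl ⟨x, m, h, Walk.start_mem_support _,
          by rw [Walk.support_cons]; exact List.mem_cons_of_mem _ (Walk.start_mem_support _),
          ?_⟩
        rw [heq]
        exact Walk.end_mem_support _

lemma support_symm (S : MultiSubdivision G H 2) {c d : V} (i : Fin (G.m c d)) {y : W}
    (h : y ∈ (S.path c d i).support) :
    y ∈ (S.path d c (Fin.cast (G.symm c d) i)).support := by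
  rw [S.path_symm c d i, Walk.support_reverse, List.mem_reverse]
  exact h

lemma lift_avoid (S : MultiSubdivision G H 2) {a b : V} {w : W} (hw : w ∈ Cset S a b)
    {e a' : V} (hfe : S.f e ∉ NSet H w) (r : G.support.Walk e a')
    (hRC : ∀ c ∈ r.support, c = e ∨ (c ≠ a ∧ c ≠ b)) :
    ∀ y ∈ (liftWalk S r).support, y ∉ NSet H w := by
  intro y hy
  rcases liftWalk_support S r y hy with ⟨c, d, hcd, hc, hd, hmem⟩ | ⟨heq, -⟩
  · rcases hRC c hc with rfl | ⟨hca, hcb⟩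
    · rcases hRC d hd with rfl | ⟨hda, hdb⟩
      · exfalso
        rw [G.loopless] at hcd
        exact Nat.lt_irrefl 0 hcd
      · exact avoid_first S hw hda hdb hfe y hmem
    · rcases hRC d hd with rfl | ⟨hda, hdb⟩
      · exact avoid_first S hw hca hcb hfe y (support_symm S _ hmem)
      · exact avoid_far S hw hca hcb hda hdb y hmem
  · rw [heq]
    exact hfe

lemma push [Fintype W] (S : MultiSubdivision G H 2) {F : W → Box}
    (hF : IsFrameRepresentation H F) {a b a' b' : V}
    (hab : a ≠ b) (hd1 : a' ≠ a) (hd2 : a' ≠ b) (hd3 : b' ≠ a) (hd4 : b' ≠ b)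
    (hroute : ∀ e : V, e = a ∨ e = b → ∃ r : G.support.Walk e a',
      ∀ c ∈ r.support, c = e ∨ (c ≠ a ∧ c ≠ b))
    {w z : W} (hw : w ∈ Cset S a b) (hz : z ∈ Cset S a b) (hzw : z ∉ NSet H w)
    (hIn : BIn (F z) (F w)) {s₂ : W} (hs₂ : s₂ ∈ Cset S a' b') :
    BIn (F s₂) (F w) := by
  classical
  obtain ⟨e, q1, he, hav1⟩ := arc S hab hw hz hzw
  obtain ⟨r, hr⟩ := hroute e he
  have hfe : S.f e ∉ NSet H w := hav1 _ (Walk.end_mem_support _)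
  have hav2 := lift_avoid S hw hfe r hr
  obtain ⟨j2, hj2⟩ := hs₂
  have hav3 : ∀ y ∈ ((S.path a' b' j2).takeUntil s₂ hj2).support, y ∉ NSet H w := fun y hy =>
    avoid_far S hw hd1 hd2 hd3 hd4 y ((S.path a' b' j2).support_takeUntil_subset hj2 hy)
  refine propagate hF ((q1.append (liftWalk S r)).append
    ((S.path a' b' j2).takeUntil s₂ hj2)) ?_ hIn
  intro y hy
  rw [Walk.mem_support_append_iff, Walk.mem_support_append_iff] at hy
  rcases hy with (hy | hy) | hy
  · exact hav1 y hy
  · exact hav2 y hy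
  · exact hav3 y hy

lemma main_abstract [Fintype W] (S : MultiSubdivision G H 2) {F : W → Box}
    (hF : IsFrameRepresentation H F) {a b a' b' : V}
    (hab : a ≠ b) (ha'b' : a' ≠ b') (hm2 : G.m a b = 2) (hm2' : G.m a' b' = 2)
    (hd1 : a' ≠ a) (hd2 : a' ≠ b) (hd3 : b' ≠ a) (hd4 : b' ≠ b)
    (hroute : ∀ e : V, e = a ∨ e = b → ∃ r : G.support.Walk e a',
      ∀ c ∈ r.support, c = e ∨ (c ≠ a ∧ c ≠ b))
    (hroute' : ∀ e : V, e = a' ∨ e = b' → ∃ r : G.support.Walk e a,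
      ∀ c ∈ r.support, c = e ∨ (c ≠ a' ∧ c ≠ b')) :
    False := by
  obtain ⟨z1, w1, hz1C, hw1C, hne1, hnadj1, hnadj1', hIn1⟩ := seed S hF hab hm2
  obtain ⟨z2, w2, hz2C, hw2C, hne2, hnadj2, hnadj2', hIn2⟩ := seed S hF ha'b' hm2'
  have hz1N : z1 ∉ NSet H w1 := by
    intro h
    rcases h with h | h
    · exact hne1 h
    · exact hnadj1 h
  have hz2N : z2 ∉ NSet H w2 := by
    intro h
    rcases h with h | h
    · exact hne2 h
    · exact hnadj2 h
  have h12 : BIn (F w2) (F w1) :=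
    push S hF hab hd1 hd2 hd3 hd4 hroute hw1C hz1C hz1N hIn1 hw2C
  have h21 : BIn (F w1) (F w2) :=
    push S hF ha'b' (Ne.symm hd1) (Ne.symm hd3) (Ne.symm hd2) (Ne.symm hd4) hroute' hw2C hz2C hz2N hIn2 hw1C
  exact bin_asymm h12 h21

end S15


/-- No `≥2`-subdivision of `Ĥ₁` and no `≥2`-subdivision of `Ĥ₂`
is a restricted frame graph. -/
theorem no_ge_two_subdivision_H1hat_H2hat
    {W : Type} [Fintype W] (H : SimpleGraph W)
    (hsub : IsSubdivisionGE H1hat 2 H ∨ IsSubdivisionGE H2hat 2 H) :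
    ¬ IsRestrictedFrameGraph H := by
  rintro ⟨F, hF⟩
  rcases hsub with h | h
  · -- `Ĥ₁` : digons (0,1) and (4,5), route through 2, 3
    obtain ⟨S⟩ : Nonempty (MultiSubdivision H1hat H 2) := h
    refine S15.main_abstract S hF (a := 0) (b := 1) (a' := 4) (b' := 5)
      (by decide) (by decide) (by decide) (by decide)
      (by decide) (by decide) (by decide) (by decide) ?_ ?_
    · intro e he
      have h1 : ∀ e' : Fin 6, e' = 0 ∨ e' = 1 → H1hat.support.Adj e' 2 := by
        intro e' he'
        rcases he' with rfl | rfl <;> · show 0 < H1hat.m _ 2; decide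
      have h2 : H1hat.support.Adj 2 3 := by show 0 < H1hat.m 2 3; decide
      have h3 : H1hat.support.Adj 3 4 := by show 0 < H1hat.m 3 4; decide
      refine ⟨.cons (h1 e he) (.cons h2 (.cons h3 .nil)), ?_⟩
      intro c hc
      simp only [SimpleGraph.Walk.support_cons, SimpleGraph.Walk.support_nil,
        List.mem_cons, List.not_mem_nil, or_false] at hc
      rcases hc with rfl | rfl | rfl | rfl
      · exact Or.inl rfl
      · exact Or.inr (by decide)
      · exact Or.inr (by decide)
      · exact Or.inr (by decide)
    · intro e he
      have h1 : ∀ e' : Fin 6, e' = 4 ∨ e' = 5 → H1hat.support.Adj e' 3 := by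
        intro e' he'
        rcases he' with rfl | rfl <;> · show 0 < H1hat.m _ 3; decide
      have h2 : H1hat.support.Adj 3 2 := by show 0 < H1hat.m 3 2; decide
      have h3 : H1hat.support.Adj 2 0 := by show 0 < H1hat.m 2 0; decide
      refine ⟨.cons (h1 e he) (.cons h2 (.cons h3 .nil)), ?_⟩
      intro c hc
      simp only [SimpleGraph.Walk.support_cons, SimpleGraph.Walk.support_nil,
        List.mem_cons, List.not_mem_nil, or_false] at hc
      rcases hc with rfl | rfl | rfl | rfl
      · exact Or.inl rfl
      · exact Or.inr (by decide)
      · exact Or.inr (by decide)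
      · exact Or.inr (by decide)
  · -- `Ĥ₂` : digons (0,1) and (3,4), route through 2
    obtain ⟨S⟩ : Nonempty (MultiSubdivision H2hat H 2) := h
    refine S15.main_abstract S hF (a := 0) (b := 1) (a' := 3) (b' := 4)
      (by decide) (by decide) (by decide) (by decide)
      (by decide) (by decide) (by decide) (by decide) ?_ ?_
    · intro e he
      have h1 : ∀ e' : Fin 5, e' = 0 ∨ e' = 1 → H2hat.support.Adj e' 2 := by
        intro e' he'
        rcases he' with rfl | rfl <;> · show 0 < H2hat.m _ 2; decide
      have h2 : H2hat.support.Adj 2 3 := by show 0 < H2hat.m 2 3; decide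
      refine ⟨.cons (h1 e he) (.cons h2 .nil), ?_⟩
      intro c hc
      simp only [SimpleGraph.Walk.support_cons, SimpleGraph.Walk.support_nil,
        List.mem_cons, List.not_mem_nil, or_false] at hc
      rcases hc with rfl | rfl | rfl
      · exact Or.inl rfl
      · exact Or.inr (by decide)
      · exact Or.inr (by decide)
    · intro e he
      have h1 : ∀ e' : Fin 5, e' = 3 ∨ e' = 4 → H2hat.support.Adj e' 2 := by
        intro e' he'
        rcases he' with rfl | rfl <;> · show 0 < H2hat.m _ 2; decide
      have h2 : H2hat.support.Adj 2 0 := by show 0 < H2hat.m 2 0; decide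
      refine ⟨.cons (h1 e he) (.cons h2 .nil), ?_⟩
      intro c hc
      simp only [SimpleGraph.Walk.support_cons, SimpleGraph.Walk.support_nil,
        List.mem_cons, List.not_mem_nil, or_false] at hc
      rcases hc with rfl | rfl | rfl
      · exact Or.inl rfl
      · exact Or.inr (by decide)
      · exact Or.inr (by decide)
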